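/- Suppose ∑_{n} ε_n < ∞, there exists M* < 1 with M_n ≤ M* for all n, and q = (M + M*)/(1 − M*) < 1. If a nonnegative sequence (r_n) satisfies (1 − M_n) r_n ≤ (M + M_{n-1}) r_{n-1} + ε_{n-1} + ε_n for all n ≥ 1, then ∑_n r_n < ∞. -/
import Mathlib


/-- Summability of increments under the contraction hypothesis. -/
theorem stmt_8 (r εn Mn : ℕ → ℝ) (M Mstar : ℝ)
    (hr : ∀ n, 0 ≤ r n) (hεn : ∀ n, 0 ≤ εn n) (hMn : ∀ n, 0 ≤ Mn n) (hM : 0 ≤ M)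
    (hε : Summable εn)
    (hMstar : Mstar < 1) (hMnle : ∀ n, Mn n ≤ Mstar)
    (hq : (M + Mstar) / (1 - Mstar) < 1)
    (hrec : ∀ n : ℕ, 1 ≤ n →
      (1 - Mn n) * r n ≤ (M + Mn (n - 1)) * r (n - 1) + εn (n - 1) + εn n) :
    Summable r := by
  have h1 : 0 < 1 - Mstar := by linarith
  have h2 : M + Mstar < 1 - Mstar := (div_lt_one h1).mp hq
  have hMs0 : 0 ≤ Mstar := le_trans (hMn 0) (hMnle 0)
  set E := ∑' n, εn n with hE
  have hE0 : 0 ≤ E := tsum_nonneg hεn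
  have hsum : ∀ N, ∑ k ∈ Finset.range N, εn k ≤ E :=
    fun N => Summable.sum_le_tsum _ (fun i _ => hεn i) hε
  have hsum' : ∀ N, ∑ k ∈ Finset.range N, εn (k + 1) ≤ E := by
    intro N
    have h := hsum (N + 1)
    rw [Finset.sum_range_succ'] at h
    linarith [hεn 0]
  have hδ : 0 < (1 - Mstar) - (M + Mstar) := by linarith
  set C := ((1 - Mstar) * r 0 + 2 * E) / ((1 - Mstar) - (M + Mstar)) with hC
  apply summable_of_sum_range_le hr (c := C)
  intro N
  cases N with
  | zero =>
    simp only [Finset.range_zero, Finset.sum_empty]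
    rw [hC]
    exact div_nonneg (by nlinarith [hr 0]) hδ.le
  | succ N =>
    set A := ∑ k ∈ Finset.range (N + 1), r k with hA
    set B := ∑ k ∈ Finset.range N, r k with hB
    have hBA : B ≤ A := by
      rw [hA, Finset.sum_range_succ]
      linarith [hr N]
    have key : ∑ k ∈ Finset.range N, (1 - Mn (k + 1)) * r (k + 1)
        ≤ ∑ k ∈ Finset.range N, ((M + Mn k) * r k + εn k + εn (k + 1)) := by
      apply Finset.sum_le_sum
      intro k _
      simpa using hrec (k + 1) (by omega)
    have lhs : (1 - Mstar) * (A - r 0)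
        ≤ ∑ k ∈ Finset.range N, (1 - Mn (k + 1)) * r (k + 1) := by
      have : A - r 0 = ∑ k ∈ Finset.range N, r (k + 1) := by
        rw [hA, Finset.sum_range_succ']; ring
      rw [this, Finset.mul_sum]
      apply Finset.sum_le_sum
      intro k _
      exact mul_le_mul_of_nonneg_right (by linarith [hMnle (k + 1)]) (hr (k + 1))
    have rhs : ∑ k ∈ Finset.range N, ((M + Mn k) * r k + εn k + εn (k + 1))
        ≤ (M + Mstar) * B + E + E := by
      rw [Finset.sum_add_distrib, Finset.sum_add_distrib, hB, Finset.mul_sum]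
      have hmain : ∑ k ∈ Finset.range N, (M + Mn k) * r k
          ≤ ∑ k ∈ Finset.range N, (M + Mstar) * r k := by
        apply Finset.sum_le_sum
        intro k _
        exact mul_le_mul_of_nonneg_right (by linarith [hMnle k]) (hr k)
      have := hsum N
      have := hsum' N
      linarith
    have hMB : (M + Mstar) * B ≤ (M + Mstar) * A :=
      mul_le_mul_of_nonneg_left hBA (by linarith)
    have hfin : ((1 - Mstar) - (M + Mstar)) * A ≤ (1 - Mstar) * r 0 + 2 * E := by
      nlinarith
    rw [hC, le_div_iff₀ hδ]
    linarith
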